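/- arXiv:1210.1116 — 2 statements merged into one kernel-verified Lean document; each statement's English description precedes it below -/
import Mathlib

section
/- Let A be a finite alphabet with N letters, let k ≤ N, and let \overline{w} = a_1a_2...a_k ∈ A^k be a word whose k letters are pairwise distinct. Then for every word w ∈ A^k one has T_{\overline{w}} ⪯_st T_w; equivalently, for every t ∈ ℕ, the number of strings s ∈ A^t containing no occurrence of \overline{w} is at most the number of strings s ∈ A^t containing no occurrence of w. -/
open Finset

def Occurs {A : Type*} {k t : ℕ} (w : Fin k → A) (s : Fin t → A) : Prop :=
  ∃ m : ℕ, ∃ hm : m + k ≤ t, ∀ j : Fin k,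
    s ⟨m + (j : ℕ), by have := j.isLt; omega⟩ = w j

namespace DSS

set_option linter.unusedSectionVars false

variable {A : Type} [Fintype A] {k : ℕ}

noncomputable def navoid (w : Fin k → A) (t : ℕ) : ℕ :=
  Nat.card {s : Fin t → A // ¬ Occurs w s}

lemma not_occurs_of_lt {w : Fin k → A} {t : ℕ} (h : t < k) (s : Fin t → A) :
    ¬ Occurs w s := by
  rintro ⟨m, hm, _⟩; omega

lemma navoid_of_lt (w : Fin k → A) {t : ℕ} (h : t < k) :
    navoid w t = Fintype.card A ^ t := by
  rw [navoid, Nat.card_congr (Equiv.subtypeUnivEquiv (not_occurs_of_lt h))]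
  simp [Nat.card_eq_fintype_card]

lemma navoid_zero (w : Fin k → A) (hk : 1 ≤ k) : navoid w 0 = 1 := by
  rw [navoid_of_lt w hk]; simp

/-- `s` ends with the block `w`. -/
def EndsW (w : Fin k → A) {t : ℕ} (s : Fin (t+1) → A) : Prop :=
  ∀ j : Fin k, ∀ h : t + 1 - k + (j : ℕ) < t + 1, s ⟨t + 1 - k + (j : ℕ), h⟩ = w j

lemma occurs_succ_iff {w : Fin k → A} {t : ℕ} (hk : k ≤ t + 1) (s : Fin (t+1) → A) :
    Occurs w s ↔ Occurs w (Fin.init s) ∨ EndsW w s := by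
  constructor
  · rintro ⟨m, hm, hocc⟩
    rcases lt_or_ge (m + k) (t+1) with h | h
    · exact Or.inl ⟨m, by omega, fun j => hocc j⟩
    · refine Or.inr (fun j hj => ?_)
      have hm' : t + 1 - k = m := by omega
      have : (⟨t + 1 - k + (j : ℕ), hj⟩ : Fin (t+1)) = ⟨m + (j : ℕ), by have := j.isLt; omega⟩ :=
        Fin.ext (show t + 1 - k + (j : ℕ) = m + (j : ℕ) by omega)
      rw [this]; exact hocc j
  · rintro (⟨m, hm, hocc⟩ | he)
    · exact ⟨m, by omega, fun j => hocc j⟩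
    · exact ⟨t + 1 - k, by omega, fun j => he j (by have := j.isLt; omega)⟩


lemma card_split {α : Type} [Finite α] (p q : α → Prop) :
    Nat.card {x // p x} = Nat.card {x // p x ∧ q x} + Nat.card {x // p x ∧ ¬ q x} := by
  classical
  have e : {x // p x ∧ q x} ⊕ {x // p x ∧ ¬ q x} ≃ {x // p x} :=
    (Equiv.sumCongr (Equiv.subtypeSubtypeEquivSubtypeInter p q).symm
       (Equiv.subtypeSubtypeEquivSubtypeInter p (fun x => ¬ q x)).symm).trans
      (Equiv.sumCompl (fun y : {x // p x} => q y.1))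
  rw [← Nat.card_congr e, Nat.card_sum]

noncomputable def eqv1 (w : Fin k → A) (t : ℕ) :
    {s : Fin (t+1) → A // ¬ Occurs w (Fin.init s)} ≃ {u : Fin t → A // ¬ Occurs w u} × A where
  toFun s := (⟨Fin.init s.1, s.2⟩, s.1 (Fin.last t))
  invFun p := ⟨Fin.snoc p.1.1 p.2, by rw [Fin.init_snoc]; exact p.1.2⟩
  left_inv s := Subtype.ext (Fin.snoc_init_self s.1)
  right_inv p := by
    refine Prod.ext (Subtype.ext ?_) ?_
    · simp
    · simp

lemma split (w : Fin k → A) (t : ℕ) (hk : k ≤ t + 1) :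
    Fintype.card A * navoid w t =
      navoid w (t+1) +
        Nat.card {s : Fin (t+1) → A // ¬ Occurs w (Fin.init s) ∧ EndsW w s} := by
  have h1 : Nat.card {s : Fin (t+1) → A // ¬ Occurs w (Fin.init s)} =
      Fintype.card A * navoid w t := by
    rw [Nat.card_congr (eqv1 w t), Nat.card_prod, Nat.card_eq_fintype_card (α := A),
      navoid, mul_comm]
  have h2 : Nat.card {s : Fin (t+1) → A // ¬ Occurs w (Fin.init s) ∧ ¬ EndsW w s} =
      navoid w (t+1) := by
    refine Nat.card_congr (Equiv.subtypeEquivRight fun s => ?_)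
    rw [occurs_succ_iff hk s]; tauto
  rw [← h1, card_split (fun s : Fin (t+1) → A => ¬ Occurs w (Fin.init s)) (EndsW w), h2,
    add_comm]


lemma ecount_le (w : Fin k → A) (t : ℕ) (hk1 : 1 ≤ k) (hk : k ≤ t + 1) :
    Nat.card {s : Fin (t+1) → A // ¬ Occurs w (Fin.init s) ∧ EndsW w s}
      ≤ navoid w (t + 1 - k) := by
  have key : ∀ s : {s : Fin (t+1) → A // ¬ Occurs w (Fin.init s) ∧ EndsW w s},
      ¬ Occurs w (fun i : Fin (t + 1 - k) => s.1 ⟨i.1, by omega⟩) := by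
    rintro ⟨s, hs1, hs2⟩ ⟨m, hm, hocc⟩
    refine hs1 ⟨m, by omega, fun j => ?_⟩
    have := hocc j
    simpa [Fin.init] using this
  refine Nat.card_le_card_of_injective
    (fun s => ⟨fun i => s.1 ⟨i.1, by omega⟩, key s⟩) ?_
  rintro ⟨s₁, h₁, e₁⟩ ⟨s₂, h₂, e₂⟩ h
  have hres := congrArg Subtype.val h
  simp only [Subtype.mk.injEq] at hres ⊢
  funext i
  rcases lt_or_ge i.1 (t + 1 - k) with hi | hi
  · have := congrFun hres ⟨i.1, hi⟩
    simpa [Fin.eta] using this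
  · have hj : i.1 - (t + 1 - k) < k := by omega
    have h1 := e₁ ⟨i.1 - (t + 1 - k), hj⟩ (show t + 1 - k + (i.1 - (t + 1 - k)) < t + 1 by omega)
    have h2 := e₂ ⟨i.1 - (t + 1 - k), hj⟩ (show t + 1 - k + (i.1 - (t + 1 - k)) < t + 1 by omega)
    have hieq : i = ⟨t + 1 - k + (i.1 - (t + 1 - k)), by omega⟩ := Fin.ext (by simp; omega)
    rw [hieq]
    rw [h1, h2]

lemma ecount_ge (wb : Fin k → A) (hinj : Function.Injective wb) (t : ℕ)
    (hk1 : 1 ≤ k) (hk : k ≤ t + 1) :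
    navoid wb (t + 1 - k) ≤
      Nat.card {s : Fin (t+1) → A // ¬ Occurs wb (Fin.init s) ∧ EndsW wb s} := by
  have key : ∀ u : {u : Fin (t + 1 - k) → A // ¬ Occurs wb u},
      ¬ Occurs wb (Fin.init (fun i : Fin (t+1) =>
        if h : i.1 < t + 1 - k then u.1 ⟨i.1, h⟩ else wb ⟨i.1 - (t + 1 - k), by omega⟩))
      ∧ EndsW wb (fun i : Fin (t+1) =>
        if h : i.1 < t + 1 - k then u.1 ⟨i.1, h⟩ else wb ⟨i.1 - (t + 1 - k), by omega⟩) := by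
    rintro ⟨u, hu⟩
    constructor
    · rintro ⟨m, hm, hocc⟩
      rcases le_or_gt (m + k) (t + 1 - k) with hcase | hcase
      · refine hu ⟨m, hcase, fun j => ?_⟩
        have := hocc j
        have hlt : m + (j : ℕ) < t + 1 - k := by have := j.isLt; omega
        simpa [Fin.init, dif_pos hlt] using this
      · have hmlt : m < t + 1 - k := by omega
        have hj0 : t + 1 - k - m < k := by omega
        have := hocc ⟨t + 1 - k - m, hj0⟩
        have hidx : m + (t + 1 - k - m) = t + 1 - k := by omega
        have hnlt : ¬ (t + 1 - k < t + 1 - k) := lt_irrefl _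
        simp only [Fin.init] at this
        rw [show (Fin.castSucc ⟨m + (t + 1 - k - m), by omega⟩ : Fin (t+1)) =
            ⟨t + 1 - k, by omega⟩ from Fin.ext (by simp [hidx])] at this
        rw [dif_neg hnlt] at this
        have heq : wb ⟨t + 1 - k - (t + 1 - k), by omega⟩ = wb ⟨t + 1 - k - m, hj0⟩ := this
        have := hinj heq
        simp only [Fin.mk.injEq] at this
        omega
    · intro j hj
      have hnlt : ¬ (t + 1 - k + (j : ℕ) < t + 1 - k) := by omega
      simp only [dif_neg hnlt]
      congr 1
      exact Fin.ext (by simp)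
  refine Nat.card_le_card_of_injective
    (fun u => ⟨fun i : Fin (t+1) =>
      if h : i.1 < t + 1 - k then u.1 ⟨i.1, h⟩ else wb ⟨i.1 - (t + 1 - k), by omega⟩,
      key u⟩) ?_
  rintro ⟨u₁, h₁⟩ ⟨u₂, h₂⟩ h
  have hres := congrArg Subtype.val h
  simp only [Subtype.mk.injEq] at hres ⊢
  funext i
  have := congrFun hres ⟨i.1, by omega⟩
  simpa [dif_pos i.isLt, Fin.eta] using this


lemma f_rec (wb : Fin k → A) (hinj : Function.Injective wb) {t : ℕ}
    (hk1 : 1 ≤ k) (hk : k ≤ t + 1) :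
    navoid wb (t+1) + navoid wb (t + 1 - k) ≤ Fintype.card A * navoid wb t := by
  rw [split wb t hk]
  exact Nat.add_le_add_left (ecount_ge wb hinj t hk1 hk) _

lemma g_rec (w : Fin k → A) {t : ℕ} (hk1 : 1 ≤ k) (hk : k ≤ t + 1) :
    Fintype.card A * navoid w t ≤ navoid w (t+1) + navoid w (t + 1 - k) := by
  rw [split w t hk]
  exact Nat.add_le_add_left (ecount_le w t hk1 hk) _

lemma ratio (wb w : Fin k → A) (hinj : Function.Injective wb) (hk1 : 1 ≤ k)
    (hN : 1 ≤ Fintype.card A) :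
    ∀ t, ∀ a ≤ t, navoid wb t * navoid w a ≤ navoid w t * navoid wb a := by
  intro t
  induction t using Nat.strong_induction_on with
  | _ t ih =>
    intro a ha
    rcases eq_or_lt_of_le ha with rfl | hat
    · rw [mul_comm]
    · obtain ⟨t', rfl⟩ : ∃ t', t = t' + 1 := ⟨t - 1, by omega⟩
      by_cases hkt : t' + 1 < k
      · rw [navoid_of_lt wb hkt, navoid_of_lt w hkt,
          navoid_of_lt wb (show a < k by omega), navoid_of_lt w (show a < k by omega)]
      · push_neg at hkt
        have ha' : a ≤ t' := by omega
        by_cases hft : navoid wb t' = 0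
        · have h0 : navoid wb (t'+1) = 0 := by
            have h := f_rec wb hinj hk1 hkt
            rw [hft, mul_zero] at h
            omega
          simp [h0]
        · have hfpos : 0 < navoid wb t' := Nat.pos_of_ne_zero hft
          have hfg : navoid wb t' ≤ navoid w t' := by
            have h1 := ih t' (by omega) 0 (Nat.zero_le _)
            rwa [navoid_zero wb hk1, navoid_zero w hk1, mul_one, mul_one] at h1
          have hR := ih t' (by omega) (t' + 1 - k) (by omega)
          have h1 := f_rec wb hinj hk1 hkt
          have h2 := g_rec w hk1 hkt
          have H : navoid wb (t'+1) * navoid w t' ≤ navoid w (t'+1) * navoid wb t' := by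
            have key : navoid wb (t'+1) * navoid w t' + navoid wb (t' + 1 - k) * navoid w t'
                ≤ navoid w (t'+1) * navoid wb t' + navoid wb (t' + 1 - k) * navoid w t' := by
              calc navoid wb (t'+1) * navoid w t' + navoid wb (t' + 1 - k) * navoid w t'
                  = (navoid wb (t'+1) + navoid wb (t' + 1 - k)) * navoid w t' := by ring
                _ ≤ (Fintype.card A * navoid wb t') * navoid w t' :=
                    Nat.mul_le_mul_right _ h1
                _ = (Fintype.card A * navoid w t') * navoid wb t' := by ring
                _ ≤ (navoid w (t'+1) + navoid w (t' + 1 - k)) * navoid wb t' :=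
                    Nat.mul_le_mul_right _ h2
                _ = navoid w (t'+1) * navoid wb t' + navoid w (t' + 1 - k) * navoid wb t' := by
                    ring
                _ ≤ navoid w (t'+1) * navoid wb t' + navoid wb (t' + 1 - k) * navoid w t' := by
                    refine Nat.add_le_add_left ?_ _
                    calc navoid w (t' + 1 - k) * navoid wb t'
                        = navoid wb t' * navoid w (t' + 1 - k) := by ring
                      _ ≤ navoid w t' * navoid wb (t' + 1 - k) := hR
                      _ = navoid wb (t' + 1 - k) * navoid w t' := by ring
            exact Nat.le_of_add_le_add_right key
          have hRa := ih t' (by omega) a ha'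
          have pos : 0 < navoid wb t' * navoid w t' :=
            Nat.mul_pos hfpos (lt_of_lt_of_le hfpos hfg)
          have big : (navoid wb (t'+1) * navoid w a) * (navoid wb t' * navoid w t')
              ≤ (navoid w (t'+1) * navoid wb a) * (navoid wb t' * navoid w t') := by
            calc (navoid wb (t'+1) * navoid w a) * (navoid wb t' * navoid w t')
                = (navoid wb (t'+1) * navoid w t') * (navoid wb t' * navoid w a) := by ring
              _ ≤ (navoid w (t'+1) * navoid wb t') * (navoid w t' * navoid wb a) :=
                  Nat.mul_le_mul H hRa
              _ = (navoid w (t'+1) * navoid wb a) * (navoid wb t' * navoid w t') := by ring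
          exact Nat.le_of_mul_le_mul_right big pos

end DSS

/-- Proposition 3 (De Santis–Spizzichino): if `k ≤ N`, a word `w̄` with
pairwise distinct letters is a stochastic minimum: `T_{w̄} ⪯_st T_w` for every
word `w` of the same length, i.e. for every `t` there are at most as many
strings of length `t` avoiding `w̄` as strings avoiding `w`. -/
theorem distinct_letters_word_is_st_minimal
    (N k : ℕ) (A : Type) [Fintype A] (hcard : Fintype.card A = N) (hkN : k ≤ N)
    (wbar : Fin k → A) (hinj : Function.Injective wbar) (w : Fin k → A) :
    ∀ t : ℕ,
      Nat.card {s : Fin t → A // ¬ Occurs wbar s} ≤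
        Nat.card {s : Fin t → A // ¬ Occurs w s} := by
  intro t
  rcases Nat.eq_zero_or_pos k with rfl | hk1
  · have h1 : ∀ s : Fin t → A, Occurs wbar s := fun s => ⟨0, by omega, fun j => j.elim0⟩
    haveI : IsEmpty {s : Fin t → A // ¬ Occurs wbar s} := ⟨fun x => x.2 (h1 x.1)⟩
    simp [Nat.card_of_isEmpty]
  · have hN : 1 ≤ Fintype.card A := by omega
    have h := DSS.ratio wbar w hinj hk1 hN t 0 (Nat.zero_le _)
    rwa [DSS.navoid_zero wbar hk1, DSS.navoid_zero w hk1, mul_one, mul_one] at h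
end

section
/- Let w and w' be two words of length k whose letters all belong to an alphabet A with N letters, and let Â ⊇ A be a larger alphabet with N̂ ≥ N letters. If the rowwise stochastic comparison p'^{(w')}_{i,·} ⪯_st p^{(w)}_{i,·} between the word transition matrices over A holds for every i = 0,...,k-1 (where p^{(w)} = P_A^{(w)} and p'^{(w')} = P_A^{(w')}), then the same rowwise comparison holds for the word transition matrices over Â: (P_Â^{(w')})_{i,·} ⪯_st (P_Â^{(w)})_{i,·} for every i = 0,...,k-1. -/
open Finset Matrix

open scoped Classical

/-- Usual stochastic order between two vectors on `Fin m`. -/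
def stDom {m : ℕ} (μ ν : Fin m → ℝ) : Prop :=
  ∀ j : Fin m, ∑ l ∈ Finset.univ.filter (fun l => j ≤ l), μ l ≤
    ∑ l ∈ Finset.univ.filter (fun l => j ≤ l), ν l

/-- `phiW w i a` is the length of the longest prefix of `w` that is a suffix
of the string `w_0 … w_{i-1} a` (states are `0`-indexed here: the state
`i : Fin k` means that the first `i` letters of `w` have just been matched). -/
noncomputable def phiW {A : Type*} {k : ℕ} (w : Fin k → A) (i : Fin k) (a : A) : ℕ :=
  sSup { h : ℕ | ∃ _hle1 : h ≤ (i : ℕ) + 1, ∃ _hle2 : h ≤ k,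
    ∀ j : ℕ, ∀ _hj : j < h,
      w ⟨j, by omega⟩ =
        if _ht : (i : ℕ) + 1 - h + j < (i : ℕ) then
          w ⟨(i : ℕ) + 1 - h + j, by have := i.isLt; omega⟩
        else a }

/-- The transition matrix on `E_k = {0, …, k}` of the Markov chain associated
to the word `w` over the alphabet `A`, tracking the longest prefix of `w`
that is a suffix of the letters drawn so far; state `k` is absorbing. -/
noncomputable def wordMatrix (A : Type*) [Fintype A] {k : ℕ} (w : Fin k → A) :
    Matrix (Fin (k + 1)) (Fin (k + 1)) ℝ :=
  fun i j =>
    if hi : (i : ℕ) < k then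
      (Nat.card {a : A // phiW w ⟨(i : ℕ), hi⟩ a = (j : ℕ)} : ℝ) / (Fintype.card A : ℝ)
    else if j = i then 1 else 0


lemma phiW_comp {A B : Type*} {k : ℕ} (ι : A ↪ B) (w : Fin k → A) (i : Fin k) (a : A) :
    phiW (fun j => ι (w j)) i (ι a) = phiW w i a := by
  unfold phiW
  congr 1
  ext h
  constructor
  · rintro ⟨h1, h2, hc⟩
    refine ⟨h1, h2, fun j hj => ?_⟩
    have h3 := hc j hj
    beta_reduce at h3
    rw [← apply_dite ι] at h3
    exact ι.injective h3
  · rintro ⟨h1, h2, hc⟩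
    refine ⟨h1, h2, fun j hj => ?_⟩
    beta_reduce
    rw [← apply_dite ι]
    exact congrArg ι (hc j hj)

lemma phiW_not_range {A B : Type*} {k : ℕ} (ι : A ↪ B) (w : Fin k → A) (i : Fin k)
    (a : B) (ha : ∀ x : A, ι x ≠ a) : phiW (fun j => ι (w j)) i a = 0 := by
  unfold phiW
  have hset : { h : ℕ | ∃ _hle1 : h ≤ (i : ℕ) + 1, ∃ _hle2 : h ≤ k,
      ∀ j : ℕ, ∀ _hj : j < h,
        ι (w ⟨j, by omega⟩) =
          if _ht : (i : ℕ) + 1 - h + j < (i : ℕ) then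
            ι (w ⟨(i : ℕ) + 1 - h + j, by have := i.isLt; omega⟩)
          else a } = {0} := by
    ext h
    simp only [Set.mem_setOf_eq, Set.mem_singleton_iff]
    constructor
    · rintro ⟨h1, h2, hc⟩
      by_contra hne
      have hpos : 1 ≤ h := by omega
      have := hc (h - 1) (by omega)
      rw [dif_neg (by omega)] at this
      exact ha _ this
    · rintro rfl
      exact ⟨by omega, by omega, fun j hj => absurd hj (by omega)⟩
  rw [hset, csSup_singleton]

lemma phiW_le {A : Type*} {k : ℕ} (w : Fin k → A) (i : Fin k) (a : A) : phiW w i a ≤ k := by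
  unfold phiW
  apply csSup_le
  · exact ⟨0, Nat.zero_le _, Nat.zero_le _, fun j hj => absurd hj (by omega)⟩
  · rintro h ⟨_, h2, _⟩; exact h2

lemma wordMatrix_apply_lt {B : Type*} [Fintype B] {k : ℕ} (v : Fin k → B)
    (i : Fin (k + 1)) (hi : (i : ℕ) < k) (j : Fin (k + 1)) :
    wordMatrix B v i j =
      ((Finset.univ.filter (fun a : B => phiW v ⟨(i : ℕ), hi⟩ a = (j : ℕ))).card : ℝ) /
        (Fintype.card B : ℝ) := by
  rw [wordMatrix]
  rw [dif_pos hi, Nat.card_eq_fintype_card, Fintype.card_subtype]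

lemma count_comp {A B : Type*} [Fintype A] [Fintype B] (ι : A ↪ B) {k : ℕ}
    (w : Fin k → A) (i : Fin k) (j : ℕ) :
    ((univ : Finset B).filter (fun a => phiW (fun x => ι (w x)) i a = j)).card
    = ((univ : Finset A).filter (fun a => phiW w i a = j)).card
      + (if j = 0 then Fintype.card B - Fintype.card A else 0) := by
  have hunion : (univ : Finset B).filter (fun a => phiW (fun x => ι (w x)) i a = j)
      = ((univ.filter (fun a : A => phiW w i a = j)).image fun a => ι a)
        ∪ (univ.filter (fun b : B => (¬ ∃ a : A, ι a = b) ∧ phiW (fun x => ι (w x)) i b = j)) := by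
    ext b
    simp only [mem_filter, mem_union, mem_image, mem_univ, true_and]
    constructor
    · intro hb
      by_cases hr : ∃ a, ι a = b
      · obtain ⟨a, rfl⟩ := hr
        exact Or.inl ⟨a, by rwa [phiW_comp] at hb, rfl⟩
      · exact Or.inr ⟨hr, hb⟩
    · rintro (⟨a, ha, rfl⟩ | ⟨_, hb⟩)
      · rwa [phiW_comp]
      · exact hb
  have hdisj : Disjoint ((univ.filter (fun a : A => phiW w i a = j)).image fun a => ι a)
      ((univ : Finset B).filter (fun b : B => (¬ ∃ a : A, ι a = b) ∧ phiW (fun x => ι (w x)) i b = j)) := by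
    rw [Finset.disjoint_left]
    rintro b hb hb'
    simp only [mem_image, mem_filter, mem_univ, true_and] at hb hb'
    obtain ⟨a, _, rfl⟩ := hb
    exact hb'.1 ⟨a, rfl⟩
  rw [hunion, Finset.card_union_of_disjoint hdisj, Finset.card_image_of_injective _ ι.injective]
  congr 1
  by_cases hj : j = 0
  · subst hj
    rw [if_pos rfl]
    have h1 : (univ.filter (fun b : B => (¬ ∃ a : A, ι a = b) ∧ phiW (fun x => ι (w x)) i b = 0))
        = univ.filter (fun b : B => ¬ ∃ a : A, ι a = b) := by
      ext b
      simp only [mem_filter, mem_univ, true_and, and_iff_left_iff_imp]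
      intro hb
      exact phiW_not_range ι w i b (fun x hx => hb ⟨x, hx⟩)
    have h2 : (univ.filter (fun b : B => ∃ a : A, ι a = b)) = univ.image ι := by
      ext b
      simp [eq_comm]
    rw [h1, Finset.filter_not, Finset.card_sdiff_of_subset (filter_subset _ _), h2,
      Finset.card_image_of_injective _ ι.injective, Finset.card_univ, Finset.card_univ]
  · rw [if_neg hj]
    rw [Finset.card_eq_zero, Finset.filter_eq_empty_iff]
    rintro b - ⟨hb, hphi⟩
    have h0 := phiW_not_range ι w i b (fun x hx => hb ⟨x, hx⟩)
    omega

lemma count_sum {B : Type*} [Fintype B] {k : ℕ} (v : Fin k → B) (i : Fin k) :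
    ∑ l : Fin (k + 1), ((univ : Finset B).filter (fun a => phiW v i a = (l : ℕ))).card
      = Fintype.card B := by
  have h := Finset.card_eq_sum_card_fiberwise
    (f := fun a : B => (⟨phiW v i a, Nat.lt_succ_of_le (phiW_le v i a)⟩ : Fin (k + 1)))
    (s := univ) (t := univ) (fun x _ => mem_univ _)
  rw [Finset.card_univ] at h
  rw [h]
  refine Finset.sum_congr rfl fun l _ => ?_
  congr 1
  ext a
  simp [Fin.ext_iff]

/-- Proposition 4 (De Santis–Spizzichino): if the rowwise stochastic
comparison between the word transition matrices of `w'` and `w` holds over the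
alphabet `A`, then it also holds over any larger alphabet `Â ⊇ A`. -/
theorem rowwise_comparison_alphabet_extension
    (k N Nhat : ℕ) (A Ahat : Type) [Fintype A] [Fintype Ahat]
    (hA : Fintype.card A = N) (hAhat : Fintype.card Ahat = Nhat) (hNN : N ≤ Nhat)
    (ι : A ↪ Ahat) (w w' : Fin k → A)
    (hyp : ∀ i : Fin (k + 1), (i : ℕ) < k →
      stDom ((wordMatrix A w') i) ((wordMatrix A w) i)) :
    ∀ i : Fin (k + 1), (i : ℕ) < k →
      stDom ((wordMatrix Ahat (fun j => ι (w' j))) i)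
        ((wordMatrix Ahat (fun j => ι (w j))) i) := by
  intro i hi
  have hApos : 0 < N := hA ▸ Fintype.card_pos_iff.mpr ⟨w ⟨i, hi⟩⟩
  have hNr : (0 : ℝ) < N := by exact_mod_cast hApos
  have hNhr : (0 : ℝ) < Nhat := by exact_mod_cast lt_of_lt_of_le hApos hNN
  have hrowA : ∀ (v : Fin k → A) (l : Fin (k + 1)),
      wordMatrix A v i l
        = ((univ.filter (fun a : A => phiW v ⟨(i : ℕ), hi⟩ a = (l : ℕ))).card : ℝ) / N := by
    intro v l
    rw [wordMatrix_apply_lt v i hi l, hA]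
  have hrowB : ∀ (v : Fin k → A) (l : Fin (k + 1)),
      wordMatrix Ahat (fun x => ι (v x)) i l
        = (((univ.filter (fun a : A => phiW v ⟨(i : ℕ), hi⟩ a = (l : ℕ))).card : ℝ)
            + (if (l : ℕ) = 0 then (Nhat : ℝ) - N else 0)) / Nhat := by
    intro v l
    rw [wordMatrix_apply_lt _ i hi l, count_comp ι v ⟨(i : ℕ), hi⟩, hA, hAhat,
      Nat.cast_add, apply_ite (fun n : ℕ => (n : ℝ)), Nat.cast_sub hNN, Nat.cast_zero]
  intro j
  have hkey := hyp i hi j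
  rw [Finset.sum_congr rfl (fun l _ => hrowA w' l),
      Finset.sum_congr rfl (fun l _ => hrowA w l),
      ← Finset.sum_div, ← Finset.sum_div, div_le_div_iff_of_pos_right hNr] at hkey
  rw [Finset.sum_congr rfl (fun l _ => hrowB w' l),
      Finset.sum_congr rfl (fun l _ => hrowB w l),
      ← Finset.sum_div, ← Finset.sum_div, div_le_div_iff_of_pos_right hNhr,
      Finset.sum_add_distrib, Finset.sum_add_distrib]
  exact add_le_add_left hkey _
end
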